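/- Let (W,S) be a Coxeter system, K ⊆ S, and suppose u = u^K·u_K is a BP-decomposition. If v ≤ u in Bruhat order, then v_K ≤ u_K, where v = v^K·v_K is the parabolic decomposition of v. -/

import Mathlib

namespace Cox

variable {B : Type*} {W : Type*} [Group W] {M : CoxeterMatrix B} (cs : CoxeterSystem M W)

/-- One step of Bruhat order: right-multiply by a reflection, increasing length. -/
def lt1 (u v : W) : Prop :=
  (∃ t : W, cs.IsReflection t ∧ v = u * t) ∧ cs.length u < cs.length v

/-- The (strong) Bruhat order on `W`. -/
def le (u v : W) : Prop := Relation.ReflTransGen (lt1 cs) u v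

/-- The support of `w`: the simple reflections lying below `w` in Bruhat order
(equivalently, appearing in any reduced word for `w`). -/
def supp (w : W) : Set B := {i | le cs (cs.simple i) w}

/-- The standard parabolic subgroup generated by the simple reflections in `K`. -/
def parab (K : Set B) : Subgroup W := Subgroup.closure (cs.simple '' K)

/-- `x` belongs to the parabolic quotient `W^K`: no right descents in `K`. -/
def InQuot (K : Set B) (x : W) : Prop :=
  ∀ i ∈ K, cs.length x < cs.length (x * cs.simple i)

/-- The left descent set of `v`. -/
def DescL (v : W) : Set B := {i | cs.length (cs.simple i * v) < cs.length v}

/-- `x` is the longest element of the standard parabolic subgroup `W_K`. -/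
def IsLongest (K : Set B) (x : W) : Prop :=
  x ∈ parab cs K ∧ ∀ y ∈ parab cs K, cs.length y ≤ cs.length x

end Cox

open Cox

open CoxeterSystem List

namespace BP

section Dihedral

variable {G : Type*} [Group G]

theorem dih_q (a b : G) (ha : a * a = 1) (hb : b * b = 1) : (a * b)⁻¹ = b * a := by
  rw [mul_inv_rev, inv_eq_of_mul_eq_one_right ha, inv_eq_of_mul_eq_one_right hb]

theorem dih_comm (a b : G) (ha : a * a = 1) (hb : b * b = 1) (r : ℕ) :
    b * (a * b) ^ r = ((a * b)⁻¹) ^ r * b := by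
  induction r with
  | zero => simp
  | succ r ih =>
    have hb1 : b * (a * b) = (a * b)⁻¹ * b := by
      rw [dih_q a b ha hb]; group
    calc b * (a * b) ^ (r + 1) = (b * (a * b) ^ r) * (a * b) := by rw [pow_succ, mul_assoc]
    _ = ((a * b)⁻¹) ^ r * (b * (a * b)) := by rw [ih, mul_assoc]
    _ = ((a * b)⁻¹) ^ r * ((a * b)⁻¹ * b) := by rw [hb1]
    _ = ((a * b)⁻¹) ^ (r + 1) * b := by rw [pow_succ]; group

theorem dih_e2 (a b : G) (ha : a * a = 1) (hb : b * b = 1) (k : ℕ) :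
    ((a * b)⁻¹) ^ k * b * (a * b) ^ k = ((a * b)⁻¹) ^ (2 * k) * b := by
  calc ((a * b)⁻¹) ^ k * b * (a * b) ^ k = ((a * b)⁻¹) ^ k * (b * (a * b) ^ k) := by
        rw [mul_assoc]
  _ = ((a * b)⁻¹) ^ k * (((a * b)⁻¹) ^ k * b) := by rw [dih_comm a b ha hb]
  _ = ((a * b)⁻¹) ^ (k + k) * b := by rw [← mul_assoc, ← pow_add]
  _ = ((a * b)⁻¹) ^ (2 * k) * b := by congr 2; omega

theorem dih_e3 (a b : G) (ha : a * a = 1) (hb : b * b = 1) (k : ℕ) :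
    ((a * b)⁻¹) ^ k * (b * a * b) * (a * b) ^ k = ((a * b)⁻¹) ^ (2 * k + 1) * b := by
  have h1 : b * a * b = (a * b)⁻¹ * b := by rw [dih_q a b ha hb]
  calc ((a * b)⁻¹) ^ k * (b * a * b) * (a * b) ^ k
      = ((a * b)⁻¹) ^ k * ((a * b)⁻¹ * b) * (a * b) ^ k := by rw [h1]
  _ = ((a * b)⁻¹) ^ (k + 1) * (b * (a * b) ^ k) := by rw [← mul_assoc, ← pow_succ, mul_assoc]
  _ = ((a * b)⁻¹) ^ (k + 1) * (((a * b)⁻¹) ^ k * b) := by rw [dih_comm a b ha hb]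
  _ = ((a * b)⁻¹) ^ (k + 1 + k) * b := by rw [← mul_assoc, ← pow_add]
  _ = ((a * b)⁻¹) ^ (2 * k + 1) * b := by congr 2; omega

theorem dih_c1 (a b : G) (ha : a * a = 1) (hb : b * b = 1) (k : ℕ) (t : G) :
    ((a * b) ^ k * t * ((a * b)⁻¹) ^ k = b) ↔ (t = ((a * b)⁻¹) ^ (2 * k) * b) := by
  constructor
  · intro h
    have h4 : ((a * b)⁻¹) ^ k * ((a * b) ^ k * t * ((a * b)⁻¹) ^ k) * (a * b) ^ k = t := by
      simp only [inv_pow]; group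
    rw [h, dih_e2 a b ha hb] at h4
    exact h4.symm
  · intro h
    rw [h, ← dih_e2 a b ha hb]
    simp only [inv_pow]; group

theorem dih_c2 (a b : G) (ha : a * a = 1) (hb : b * b = 1) (k : ℕ) (t : G) :
    (b * ((a * b) ^ k * t * ((a * b)⁻¹) ^ k) * b = a) ↔ (t = ((a * b)⁻¹) ^ (2 * k + 1) * b) := by
  have e : ∀ X : G, b * (b * X * b) * b = X := fun X => by
    calc b * (b * X * b) * b = (b * b) * X * (b * b) := by group
    _ = X := by rw [hb]; group
  constructor
  · intro h
    have h2 : (a * b) ^ k * t * ((a * b)⁻¹) ^ k = b * a * b := by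
      rw [← e ((a * b) ^ k * t * ((a * b)⁻¹) ^ k), h]
    have h4 : ((a * b)⁻¹) ^ k * ((a * b) ^ k * t * ((a * b)⁻¹) ^ k) * (a * b) ^ k = t := by
      simp only [inv_pow]; group
    rw [h2, dih_e3 a b ha hb] at h4
    exact h4.symm
  · intro h
    rw [h, ← dih_e3 a b ha hb]
    have h3 : (a * b) ^ k * (((a * b)⁻¹) ^ k * (b * a * b) * (a * b) ^ k) * ((a * b)⁻¹) ^ k
        = b * a * b := by
      simp only [inv_pow]; group
    rw [h3]
    calc b * (b * a * b) * b = (b * b) * a * (b * b) := by group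
    _ = a := by rw [hb]; group

theorem dih_c3 (a b : G) (ha : a * a = 1) (hb : b * b = 1) (k : ℕ) (t : G) :
    a * (b * ((a * b) ^ k * t * ((a * b)⁻¹) ^ k) * b) * a
      = (a * b) ^ (k + 1) * t * ((a * b)⁻¹) ^ (k + 1) := by
  rw [pow_succ' (a * b), pow_succ ((a * b)⁻¹), dih_q a b ha hb]
  group

end Dihedral

variable {B : Type*} {W : Type*} [Group W] {M : CoxeterMatrix B} (cs : CoxeterSystem M W)

local prefix:100 "s" => cs.simple
local prefix:100 "ℓ" => cs.length
local prefix:100 "π" => cs.wordProd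

noncomputable section
open Classical

/-- The basic involution on `W × ZMod 2` attached to a simple reflection. -/
def permF (i : B) : Equiv.Perm (W × ZMod 2) :=
  Function.Involutive.toPerm
    (fun p => (s i * p.1 * s i, p.2 + if p.1 = s i then 1 else 0))
    (by
      intro p
      obtain ⟨t, ε⟩ := p
      have hss : s i * s i = 1 := cs.simple_mul_simple_self i
      have h1 : s i * (s i * t * s i) * s i = t := by
        calc s i * (s i * t * s i) * s i = (s i * s i) * t * (s i * s i) := by group
        _ = t := by rw [hss]; group
      have h2 : (s i * t * s i = s i) ↔ (t = s i) := by
        constructor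
        · intro h
          calc t = s i * (s i * t * s i) * s i := h1.symm
          _ = s i * s i * s i := by rw [h]
          _ = s i := by rw [hss, one_mul]
        · rintro rfl; rw [hss, one_mul]
      simp only [Prod.mk.injEq]
      refine ⟨h1, ?_⟩
      rcases eq_or_ne t (s i) with rfl | ht
      · have h3 : (1 : ZMod 2) + 1 = 0 := by decide
        simp [h3, add_assoc]
      · simp only [if_neg ht, if_neg (fun h => ht (h2.mp h)), add_zero])

theorem permF_apply (i : B) (t : W) (ε : ZMod 2) :
    permF cs i (t, ε) = (s i * t * s i, ε + if t = s i then 1 else 0) := rfl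

theorem permF_mul_pow_apply (i j : B) (k : ℕ) (t : W) (ε : ZMod 2) :
    ((permF cs i * permF cs j) ^ k) (t, ε) =
      ((s i * s j) ^ k * t * ((s i * s j)⁻¹) ^ k,
        ε + ∑ r ∈ Finset.range (2 * k),
          (if t = ((s i * s j)⁻¹) ^ r * s j then (1 : ZMod 2) else 0)) := by
  have ha := cs.simple_mul_simple_self i
  have hb := cs.simple_mul_simple_self j
  induction k with
  | zero => simp
  | succ k ih =>
    have hstep : ((permF cs i * permF cs j) ^ (k + 1)) (t, ε)
        = (permF cs i) ((permF cs j) (((permF cs i * permF cs j) ^ k) (t, ε))) := by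
      rw [pow_succ']
      rfl
    rw [hstep, ih, permF_apply, permF_apply]
    have h2 : 2 * (k + 1) = (2 * k) + 1 + 1 := by ring
    rw [h2, Finset.sum_range_succ, Finset.sum_range_succ]
    simp only [Prod.mk.injEq]
    constructor
    · exact dih_c3 (s i) (s j) ha hb k t
    · rw [show ((s i * s j) ^ k * t * ((s i * s j)⁻¹) ^ k = s j)
            = (t = ((s i * s j)⁻¹) ^ (2 * k) * s j) from
          propext (dih_c1 (s i) (s j) ha hb k t),
        show (s j * ((s i * s j) ^ k * t * ((s i * s j)⁻¹) ^ k) * s j = s i)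
            = (t = ((s i * s j)⁻¹) ^ (2 * k + 1) * s j) from
          propext (dih_c2 (s i) (s j) ha hb k t)]
      ring

theorem permF_liftable : M.IsLiftable (permF cs) := by
  intro i j
  by_cases h0 : M i j = 0
  · rw [h0, pow_zero]
  · apply Equiv.ext
    rintro ⟨t, ε⟩
    rw [Equiv.Perm.coe_one, id_eq, permF_mul_pow_apply]
    have hrel : (s i * s j) ^ M i j = 1 := cs.simple_mul_simple_pow i j
    have hrelinv : ((s i * s j)⁻¹) ^ M i j = 1 := by rw [inv_pow, hrel, inv_one]
    have h1 : (s i * s j) ^ M i j * t * ((s i * s j)⁻¹) ^ M i j = t := by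
      rw [hrel, hrelinv, one_mul, mul_one]
    have h2 : ∑ r ∈ Finset.range (2 * M i j),
        (if t = ((s i * s j)⁻¹) ^ r * s j then (1 : ZMod 2) else 0) = 0 := by
      rw [two_mul, Finset.sum_range_add]
      have h3 : ∀ r : ℕ, ((s i * s j)⁻¹) ^ (M i j + r) = ((s i * s j)⁻¹) ^ r := by
        intro r; rw [pow_add, hrelinv, one_mul]
      have h4 : ∀ r ∈ Finset.range (M i j),
          (if t = ((s i * s j)⁻¹) ^ (M i j + r) * s j then (1 : ZMod 2) else 0)
          = (if t = ((s i * s j)⁻¹) ^ r * s j then (1 : ZMod 2) else 0) := by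
        intro r _; rw [h3]
      rw [Finset.sum_congr rfl h4]
      have h5 : ∀ x : ZMod 2, x + x = 0 := by decide
      exact h5 _
    rw [h1, h2, add_zero]

/-- The reflection-parity representation. -/
def pRep : W →* Equiv.Perm (W × ZMod 2) := cs.lift ⟨permF cs, permF_liftable cs⟩

theorem pRep_simple (i : B) : pRep cs (s i) = permF cs i :=
  cs.lift_apply_simple (permF_liftable cs) i

/-- parity count of occurrences in a list -/
def cnt (t : W) : List W → ZMod 2
  | [] => 0
  | a :: l => (if a = t then 1 else 0) + cnt t l

theorem mem_of_cnt_ne_zero {t : W} {l : List W} (h : cnt t l ≠ 0) : t ∈ l := by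
  induction l with
  | nil => exact absurd rfl h
  | cons a l ih =>
    rcases eq_or_ne a t with rfl | ha
    · exact List.mem_cons_self
    · refine List.mem_cons_of_mem a (ih ?_)
      simpa [cnt, if_neg ha] using h

theorem pRep_wordProd (ω : List B) (t : W) (ε : ZMod 2) :
    pRep cs (π ω) (t, ε) = (π ω * t * (π ω)⁻¹, ε + cnt t (cs.rightInvSeq ω)) := by
  induction ω generalizing ε with
  | nil => simp [cnt]
  | cons i ω ih =>
    rw [cs.wordProd_cons, map_mul, Equiv.Perm.mul_apply, ih, pRep_simple, permF_apply]
    have hris : cs.rightInvSeq (i :: ω) = ((π ω)⁻¹ * s i * π ω) :: cs.rightInvSeq ω := rfl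
    rw [hris]
    simp only [Prod.mk.injEq]
    constructor
    · rw [mul_inv_rev, cs.inv_simple]; group
    · show _ = ε + ((if ((π ω)⁻¹ * s i * π ω) = t then (1 : ZMod 2) else 0) + _)
      have hiff : ((π ω) * t * (π ω)⁻¹ = s i) ↔ ((π ω)⁻¹ * s i * π ω = t) := by
        constructor
        · intro h; rw [← h]; group
        · intro h; rw [← h]; group
      rw [show ((π ω) * t * (π ω)⁻¹ = s i) = ((π ω)⁻¹ * s i * π ω = t) from propext hiff]
      ring

/-- parity of the number of times `t` occurs in inversion sequences of words for `w` -/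
def nn (w t : W) : ZMod 2 := (pRep cs w (t, 0)).2

theorem nn_eq_cnt (ω : List B) (t : W) : nn cs (π ω) t = cnt t (cs.rightInvSeq ω) := by
  simp [nn, pRep_wordProd]

theorem pRep_apply (w t : W) (ε : ZMod 2) :
    pRep cs w (t, ε) = (w * t * w⁻¹, ε + nn cs w t) := by
  obtain ⟨ω, -, hw⟩ := cs.exists_reduced_word' w
  subst hw
  rw [pRep_wordProd, nn_eq_cnt]

theorem nn_refl (u : W) (i : B) : nn cs (u * s i * u⁻¹) (u * s i * u⁻¹) = 1 := by
  have hfix : u⁻¹ * (u * s i * u⁻¹) * u⁻¹⁻¹ = s i := by group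
  have h1 : pRep cs u⁻¹ (u * s i * u⁻¹, 0)
      = (s i, 0 + nn cs u⁻¹ (u * s i * u⁻¹)) := by
    rw [pRep_apply, hfix]
  have h3 : pRep cs u (pRep cs u⁻¹ (u * s i * u⁻¹, 0)) = (u * s i * u⁻¹, 0) := by
    rw [← Equiv.Perm.mul_apply, ← map_mul, mul_inv_cancel, map_one, Equiv.Perm.coe_one, id_eq]
  rw [h1, pRep_apply] at h3
  have hab := congrArg Prod.snd h3
  simp only at hab
  show (pRep cs (u * s i * u⁻¹) ((u * s i * u⁻¹ : W), (0 : ZMod 2))).2 = 1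
  have h4 : pRep cs (u * s i * u⁻¹) = pRep cs u * pRep cs (s i) * pRep cs u⁻¹ := by
    rw [← map_mul, ← map_mul]
  have h5 : s i * s i * s i = s i := by rw [cs.simple_mul_simple_self, one_mul]
  rw [h4, Equiv.Perm.mul_apply, Equiv.Perm.mul_apply, h1, pRep_simple, permF_apply,
    if_pos rfl, h5, pRep_apply]
  show ((0 + nn cs u⁻¹ (u * s i * u⁻¹)) + 1) + nn cs u (s i) = 1
  linear_combination hab

theorem nn_refl' (t : W) (ht : cs.IsReflection t) : nn cs t t = 1 := by
  obtain ⟨u, i, rfl⟩ := ht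
  exact nn_refl cs u i

theorem nn_mul_refl (w t : W) (ht : cs.IsReflection t) : nn cs (w * t) t = nn cs w t + 1 := by
  have h1 : pRep cs t (t, 0) = (t, (0 : ZMod 2) + 1) := by
    rw [pRep_apply, nn_refl' cs t ht]
    congr 1
    rw [ht.inv]
    calc t * t * t = (t * t) * t := rfl
    _ = t := by rw [ht.mul_self, one_mul]
  show (pRep cs (w * t) (t, 0)).2 = nn cs w t + 1
  rw [map_mul, Equiv.Perm.mul_apply, h1, pRep_apply]
  show ((0 : ZMod 2) + 1) + nn cs w t = nn cs w t + 1
  ring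

theorem exch_of_nn_one {ω : List B} {t : W} (h : nn cs (π ω) t = 1) :
    ∃ j, j < ω.length ∧ π ω * t = π (ω.eraseIdx j) := by
  have h1 : cnt t (cs.rightInvSeq ω) ≠ 0 := by
    rw [← nn_eq_cnt, h]; decide
  have h2 : t ∈ cs.rightInvSeq ω := mem_of_cnt_ne_zero h1
  obtain ⟨j, hj, hjt⟩ := List.mem_iff_getElem.mp h2
  have hj' : j < ω.length := by simpa using hj
  refine ⟨j, hj', ?_⟩
  have h3 : (cs.rightInvSeq ω).getD j 1 = t := by
    rw [List.getD_eq_getElem _ _ hj, hjt]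
  rw [← h3]
  exact cs.wordProd_mul_getD_rightInvSeq ω j

/-- Strong exchange property, for arbitrary (not necessarily reduced) words. -/
theorem strongExchange (ω : List B) (t : W) (ht : cs.IsReflection t)
    (h : ℓ (π ω * t) < ℓ (π ω)) : ∃ j, j < ω.length ∧ π ω * t = π (ω.eraseIdx j) := by
  have h1 : nn cs (π ω) t = 1 := by
    by_contra h1
    have h0 : nn cs (π ω) t = 0 := by
      have : ∀ x : ZMod 2, x ≠ 1 → x = 0 := by decide
      exact this _ h1
    have h2 : nn cs (π ω * t) t = 1 := by rw [nn_mul_refl cs _ t ht, h0, zero_add]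
    obtain ⟨σ, hredσ, hσ⟩ := cs.exists_reduced_word' (π ω * t)
    rw [hσ] at h2
    obtain ⟨j, hj, hjeq⟩ := exch_of_nn_one cs h2
    have h4 : π σ * t = π ω := by
      rw [← hσ, mul_assoc, ht.mul_self, mul_one]
    have h5 : ℓ (π ω) ≤ (σ.eraseIdx j).length := by
      rw [← h4, hjeq]
      exact cs.length_wordProd_le _
    have h6 : (σ.eraseIdx j).length = σ.length - 1 := by
      rw [List.length_eraseIdx]
      simp [hj]
    have h7 : ℓ (π σ) = σ.length := hredσ
    rw [hσ] at h
    omega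
  exact exch_of_nn_one cs h1

theorem le_rfl (w : W) : le cs w w := Relation.ReflTransGen.refl

theorem le_trans' {a b c : W} (h1 : le cs a b) (h2 : le cs b c) : le cs a c :=
  Relation.ReflTransGen.trans h1 h2

theorem le_step {a b : W} (t : W) (ht : cs.IsReflection t) (hab : b = a * t)
    (h : ℓ a < ℓ b) : le cs a b :=
  Relation.ReflTransGen.single ⟨⟨t, ht, hab⟩, h⟩

theorem smc (i : B) (w : W) : s i * (s i * w) = w := by
  rw [← mul_assoc, cs.simple_mul_simple_self, one_mul]

theorem smc' (i : B) (w : W) : (w * s i) * s i = w := by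
  rw [mul_assoc, cs.simple_mul_simple_self, mul_one]

theorem le_mul_right_simple {w : W} {i : B} (h : ℓ w < ℓ (w * s i)) : le cs w (w * s i) :=
  le_step cs (s i) (cs.isReflection_simple i) rfl h

theorem le_mul_left_simple {w : W} {i : B} (h : ℓ w < ℓ (s i * w)) : le cs w (s i * w) := by
  have ht : cs.IsReflection (w⁻¹ * s i * w) := by
    have := (cs.isReflection_simple i).conj w⁻¹
    rwa [inv_inv] at this
  exact le_step cs (w⁻¹ * s i * w) ht (by group) h

theorem le_demote_left {w : W} {i : B} (h : ℓ (s i * w) < ℓ w) : le cs (s i * w) w := by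
  have h2 : ℓ (s i * w) < ℓ (s i * (s i * w)) := by rwa [smc]
  have h3 := le_mul_left_simple cs h2
  rwa [smc] at h3

theorem le_demote_right {w : W} {i : B} (h : ℓ (w * s i) < ℓ w) : le cs (w * s i) w := by
  have h2 : ℓ (w * s i) < ℓ ((w * s i) * s i) := by rwa [smc']
  have h3 := le_mul_right_simple cs h2
  rwa [smc'] at h3

theorem le_of_add_right_aux : ∀ (n : ℕ) (a b : W), ℓ b ≤ n →
    ℓ (a * b) = ℓ a + ℓ b → le cs a (a * b) := by
  intro n
  induction n with
  | zero =>
    intro a b hb _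
    have hb1 : b = 1 := cs.length_eq_zero_iff.mp (Nat.le_zero.mp hb)
    rw [hb1, mul_one]
    exact le_rfl cs a
  | succ n ih =>
    intro a b hb hadd
    rcases eq_or_ne b 1 with rfl | hne
    · rw [mul_one]; exact le_rfl cs a
    · obtain ⟨j, hj⟩ := cs.exists_rightDescent_of_ne_one hne
      have hj' : ℓ (b * s j) + 1 = ℓ b := cs.isRightDescent_iff.mp hj
      have hb'b : (b * s j) * s j = b := smc' cs j b
      have habj : a * b = (a * (b * s j)) * s j := by
        rw [mul_assoc, hb'b]
      have h1 : ℓ (a * (b * s j)) ≤ ℓ a + ℓ (b * s j) := cs.length_mul_le a (b * s j)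
      have h2 : ℓ (a * b) ≤ ℓ (a * (b * s j)) + 1 := by
        rw [habj]
        rcases cs.length_mul_simple (a * (b * s j)) j with h | h <;> omega
      have h3 : ℓ (a * (b * s j)) = ℓ a + ℓ (b * s j) := by omega
      have h4 := ih a (b * s j) (by omega) h3
      have h5 : ℓ (a * (b * s j)) < ℓ ((a * (b * s j)) * s j) := by
        rw [← habj]; omega
      exact le_trans' cs h4 (by rw [habj]; exact le_mul_right_simple cs h5)

theorem le_of_add_right {a b : W} (h : ℓ (a * b) = ℓ a + ℓ b) : le cs a (a * b) :=
  le_of_add_right_aux cs (ℓ b) a b (Nat.le_refl _) h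

theorem le_of_add_left_aux : ∀ (n : ℕ) (a b : W), ℓ a ≤ n →
    ℓ (a * b) = ℓ a + ℓ b → le cs b (a * b) := by
  intro n
  induction n with
  | zero =>
    intro a b ha _
    have ha1 : a = 1 := cs.length_eq_zero_iff.mp (Nat.le_zero.mp ha)
    rw [ha1, one_mul]
    exact le_rfl cs b
  | succ n ih =>
    intro a b ha hadd
    rcases eq_or_ne a 1 with rfl | hne
    · rw [one_mul]; exact le_rfl cs b
    · obtain ⟨j, hj⟩ := cs.exists_leftDescent_of_ne_one hne
      have hj' : ℓ (s j * a) + 1 = ℓ a := cs.isLeftDescent_iff.mp hj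
      have ha'a : s j * (s j * a) = a := smc cs j a
      have habj : a * b = s j * ((s j * a) * b) := by
        rw [← mul_assoc, ha'a]
      have h1 : ℓ ((s j * a) * b) ≤ ℓ (s j * a) + ℓ b := cs.length_mul_le _ b
      have h2 : ℓ (a * b) ≤ ℓ ((s j * a) * b) + 1 := by
        rw [habj]
        rcases cs.length_simple_mul ((s j * a) * b) j with h | h <;> omega
      have h3 : ℓ ((s j * a) * b) = ℓ (s j * a) + ℓ b := by omega
      have h4 := ih (s j * a) b (by omega) h3
      have h5 : ℓ ((s j * a) * b) < ℓ (s j * ((s j * a) * b)) := by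
        rw [← habj]; omega
      exact le_trans' cs h4 (by rw [habj]; exact le_mul_left_simple cs h5)

theorem le_of_add_left {a b : W} (h : ℓ (a * b) = ℓ a + ℓ b) : le cs b (a * b) :=
  le_of_add_left_aux cs (ℓ a) a b (Nat.le_refl _) h

theorem le_simple_of_left_descent {x : W} {i : B} (h : ℓ (s i * x) < ℓ x) :
    le cs (s i) x := by
  have h1 : ℓ (s i * (s i * x)) = ℓ (s i) + ℓ (s i * x) := by
    rw [smc, cs.length_simple]
    rcases cs.length_simple_mul x i with h' | h' <;> omega
  have h2 := le_of_add_right cs h1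
  rwa [smc] at h2

theorem reduced_word_cons {u : W} {i : B} (h : ℓ (s i * u) < ℓ u) :
    ∃ ω : List B, π (i :: ω) = u ∧ (i :: ω).length = ℓ u := by
  obtain ⟨ω, hlen, hw⟩ := cs.exists_reduced_word (s i * u)
  refine ⟨ω, ?_, ?_⟩
  · rw [cs.wordProd_cons, ← hw, smc]
  · have h2 : ℓ (s i * u) + 1 = ℓ u := cs.isLeftDescent_iff.mp h
    simp only [List.length_cons, hlen]
    have h3 := hlen.eq
    rw [← hw] at h3
    omega

theorem lift_atomic {z u : W} (hzu : lt1 cs z u) {i : B}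
    (hu : ℓ (s i * u) < ℓ u) (hz : ℓ z < ℓ (s i * z)) :
    le cs (s i * z) u ∧ le cs z (s i * u) := by
  obtain ⟨⟨t, ht, hut⟩, hlenzu⟩ := hzu
  obtain ⟨ω₁, hπ, hlenw⟩ := reduced_word_cons cs hu
  have hzt : u * t = z := by rw [hut, mul_assoc, ht.mul_self, mul_one]
  have hexp : ℓ (π (i :: ω₁) * t) < ℓ (π (i :: ω₁)) := by rw [hπ, hzt]; exact hlenzu
  obtain ⟨j, hj, hjeq⟩ := strongExchange cs (i :: ω₁) t ht hexp
  have hz_eq : z = π ((i :: ω₁).eraseIdx j) := by rw [← hjeq, hπ, hzt]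
  have hsu : ℓ (s i * u) + 1 = ℓ u := cs.isLeftDescent_iff.mp hu
  match j, hj with
  | 0, hj =>
    have hz_eq2 : z = π ω₁ := hz_eq
    have hzsu : z = s i * u := by
      rw [hz_eq2]
      have h3 : s i * π ω₁ = u := by rw [← cs.wordProd_cons, hπ]
      rw [← h3, smc]
    constructor
    · rw [hzsu, smc]; exact le_rfl cs u
    · rw [hzsu]; exact le_rfl cs _
  | j' + 1, hj =>
    have herase : (i :: ω₁).eraseIdx (j' + 1) = i :: (ω₁.eraseIdx j') := rfl
    have hsz : s i * z = π (ω₁.eraseIdx j') := by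
      rw [hz_eq, herase, cs.wordProd_cons, smc]
    have hlen1 : ℓ (s i * z) ≤ (ω₁.eraseIdx j').length := by
      rw [hsz]; exact cs.length_wordProd_le _
    have hj1 : j' < ω₁.length := by simpa using hj
    have hlen2 : (ω₁.eraseIdx j').length = ω₁.length - 1 := by
      rw [List.length_eraseIdx]
      simp [hj1]
    have hlenw' : ω₁.length + 1 = ℓ u := by simpa using hlenw
    have hstep : le cs (s i * z) (s i * u) :=
      le_step cs t ht (by rw [hut, mul_assoc]) (by omega)
    have hB : le cs (s i * u) u := le_demote_left cs hu
    have hC : le cs z (s i * z) := le_mul_left_simple cs hz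
    exact ⟨le_trans' cs hstep hB, le_trans' cs hC hstep⟩

theorem lift_master {v u : W} (h : le cs v u) : ∀ i : B,
    (ℓ (s i * u) < ℓ u → le cs (s i * v) u) ∧
    (ℓ (s i * u) < ℓ u → ℓ v < ℓ (s i * v) → le cs v (s i * u)) ∧
    (ℓ u < ℓ (s i * u) → ℓ v < ℓ (s i * v) → le cs (s i * v) (s i * u)) := by
  induction h with
  | refl =>
    intro i
    exact ⟨fun hu => le_demote_left cs hu, fun hu hv => (Nat.lt_asymm hu hv).elim,
      fun _ _ => le_rfl cs _⟩
  | @tail z u hvz hzu ih =>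
    intro i
    have hzu' : le cs z u := Relation.ReflTransGen.single hzu
    obtain ⟨⟨t, ht, hut⟩, hlenzu⟩ := hzu
    have hne_z := cs.length_simple_mul_ne z i
    have hne_v := cs.length_simple_mul_ne v i
    refine ⟨?_, ?_, ?_⟩
    · intro hu
      rcases lt_or_gt_of_ne hne_z with hz | hz
      · exact le_trans' cs ((ih i).1 hz) hzu'
      · rcases lt_or_gt_of_ne hne_v with hv | hv
        · exact le_trans' cs (le_demote_left cs hv) (le_trans' cs hvz hzu')
        · have h1 := (ih i).2.2 hz hv
          have h2 := (lift_atomic cs ⟨⟨t, ht, hut⟩, hlenzu⟩ hu hz).1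
          exact le_trans' cs h1 h2
    · intro hu hv
      rcases lt_or_gt_of_ne hne_z with hz | hz
      · have h1 := (ih i).2.1 hz hv
        have hsu : ℓ (s i * u) + 1 = ℓ u := cs.isLeftDescent_iff.mp hu
        have hsz : ℓ (s i * z) + 1 = ℓ z := cs.isLeftDescent_iff.mp hz
        have hstep : le cs (s i * z) (s i * u) :=
          le_step cs t ht (by rw [hut, mul_assoc]) (by omega)
        exact le_trans' cs h1 hstep
      · exact le_trans' cs hvz ((lift_atomic cs ⟨⟨t, ht, hut⟩, hlenzu⟩ hu hz).2)
    · intro hu hv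
      rcases lt_or_gt_of_ne hne_z with hz | hz
      · have h1 := (ih i).1 hz
        have h2 : le cs u (s i * u) := le_mul_left_simple cs hu
        exact le_trans' cs h1 (le_trans' cs hzu' h2)
      · have h1 := (ih i).2.2 hz hv
        have hsu : ℓ (s i * u) = ℓ u + 1 := by
          rcases cs.length_simple_mul u i with h' | h' <;> omega
        have hsz : ℓ (s i * z) = ℓ z + 1 := by
          rcases cs.length_simple_mul z i with h' | h' <;> omega
        have hstep : le cs (s i * z) (s i * u) :=
          le_step cs t ht (by rw [hut, mul_assoc]) (by omega)
        exact le_trans' cs h1 hstep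

theorem lift_iii {v u : W} (h : le cs v u) {i : B} (hu : ℓ (s i * u) < ℓ u) :
    le cs (s i * v) u := (lift_master cs h i).1 hu

theorem lift_ii {v u : W} (h : le cs v u) {i : B} (hu : ℓ (s i * u) < ℓ u)
    (hv : ℓ v < ℓ (s i * v)) : le cs v (s i * u) := (lift_master cs h i).2.1 hu hv

theorem lift_i {v u : W} (h : le cs v u) {i : B} (hu : ℓ (s i * u) < ℓ u)
    (hv : ℓ (s i * v) < ℓ v) : le cs (s i * v) (s i * u) := by
  have h1 : le cs (s i * v) u := le_trans' cs (le_demote_left cs hv) h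
  have h2 : ℓ (s i * v) < ℓ (s i * (s i * v)) := by rw [smc]; exact hv
  have h3 := (lift_master cs h1 i).2.1 hu h2
  exact h3

theorem exists_reduced_sublist_aux : ∀ (n : ℕ) (ω : List B), ω.length ≤ n →
    ∃ τ, τ.Sublist ω ∧ cs.IsReduced τ ∧ π τ = π ω := by
  intro n
  induction n with
  | zero =>
    intro ω hω
    have h0 : ω = [] := List.eq_nil_of_length_eq_zero (Nat.le_zero.mp hω)
    subst h0
    exact ⟨[], List.Sublist.refl _, by simp [CoxeterSystem.IsReduced], rfl⟩
  | succ n ih =>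
    intro ω hω
    by_cases hred : cs.IsReduced ω
    · exact ⟨ω, List.Sublist.refl ω, hred, rfl⟩
    · have hlen1 : 1 ≤ ω.length := by
        rcases Nat.eq_zero_or_pos ω.length with h0 | h; swap; · exact h
        exfalso
        apply hred
        rw [List.eq_nil_of_length_eq_zero h0]
        simp [CoxeterSystem.IsReduced]
      have hwit : ¬ cs.IsReduced (ω.take ((ω.length - 1) + 1)) := by
        rwa [List.take_of_length_le (by omega)]
      have hex : ∃ r, ¬ cs.IsReduced (ω.take (r + 1)) := ⟨ω.length - 1, hwit⟩
      set r := Nat.find hex with hrdef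
      have hr : ¬ cs.IsReduced (ω.take (r + 1)) := Nat.find_spec hex
      have hrbd : r ≤ ω.length - 1 := Nat.find_le hwit
      have hrlen : r < ω.length := by omega
      set a := ω[r]'hrlen with hadef
      have htake_succ : ω.take (r + 1) = ω.take r ++ [a] := by
        rw [List.take_succ, List.getElem?_eq_getElem hrlen]
        rfl
      have hπ1 : π (ω.take (r + 1)) = π (ω.take r) * s a := by
        rw [htake_succ, cs.wordProd_append, cs.wordProd_singleton]
      rcases Nat.eq_zero_or_pos r with hr0 | hr1
      · exfalso
        apply hr
        rw [hr0] at htake_succ ⊢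
        rw [htake_succ]
        simp only [List.take_zero, List.nil_append]
        show ℓ (π [a]) = _
        rw [cs.wordProd_singleton, cs.length_simple]
        rfl
      · have hred_take : cs.IsReduced (ω.take r) := by
          have h5 := not_not.mp (Nat.find_min hex (show r - 1 < r by omega))
          rwa [show r - 1 + 1 = r by omega] at h5
        have hlen_take : (ω.take r).length = r := by
          rw [List.length_take]; omega
        have hℓtake : ℓ (π (ω.take r)) = r := hred_take.trans hlen_take
        have hne : ℓ (π (ω.take (r + 1))) ≠ r + 1 := by
          intro hcon
          apply hr
          show ℓ (π (ω.take (r+1))) = (ω.take (r+1)).length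
          rw [hcon, List.length_take]
          omega
        have hℓlt : ℓ (π (ω.take r) * s a) < ℓ (π (ω.take r)) := by
          rcases cs.length_mul_simple (π (ω.take r)) a with h' | h' <;>
            rw [hπ1] at hne <;> omega
        obtain ⟨j, hj, hjeq⟩ := strongExchange cs (ω.take r) (s a)
          (cs.isReflection_simple a) hℓlt
        set ω' := (ω.take r).eraseIdx j ++ ω.drop (r + 1) with hω'def
        have hπω' : π ω' = π ω := by
          rw [hω'def, cs.wordProd_append, ← hjeq, ← hπ1, ← cs.wordProd_append,
            List.take_append_drop]
        have hjr : j < r := by rwa [hlen_take] at hj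
        have hlenω' : ω'.length ≤ n := by
          rw [hω'def, List.length_append, List.length_eraseIdx, List.length_drop]
          rw [hlen_take]
          simp only [hjr, if_pos]
          omega
        have hsub : ω'.Sublist ω := by
          have h1 : ((ω.take r).eraseIdx j).Sublist (ω.take r) := List.eraseIdx_sublist _ j
          have h2 : (ω.take r).Sublist (ω.take (r + 1)) := by
            rw [htake_succ]; exact List.sublist_append_left _ _
          have h3 : ω'.Sublist (ω.take (r + 1) ++ ω.drop (r + 1)) :=
            List.Sublist.append (h1.trans h2) (List.Sublist.refl _)
          rwa [List.take_append_drop] at h3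
        obtain ⟨τ, hτsub, hτred, hτπ⟩ := ih ω' hlenω'
        exact ⟨τ, hτsub.trans hsub, hτred, hτπ.trans hπω'⟩

theorem exists_reduced_sublist (ω : List B) :
    ∃ τ, τ.Sublist ω ∧ cs.IsReduced τ ∧ π τ = π ω :=
  exists_reduced_sublist_aux cs ω.length ω (Nat.le_refl _)

/-- Elements of the standard parabolic subgroup are products of words over `K`. -/
theorem parab_word {K : Set B} {w : W} (h : w ∈ parab cs K) :
    ∃ ω : List B, (∀ i ∈ ω, i ∈ K) ∧ π ω = w := by
  refine Subgroup.closure_induction ?_ ?_ ?_ ?_ h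
  · rintro x ⟨i, hi, rfl⟩
    exact ⟨[i], by simpa using hi, cs.wordProd_singleton i⟩
  · exact ⟨[], by simp, cs.wordProd_nil⟩
  · rintro x y _ _ ⟨ω₁, hK₁, rfl⟩ ⟨ω₂, hK₂, rfl⟩
    refine ⟨ω₁ ++ ω₂, ?_, (cs.wordProd_append ω₁ ω₂).symm ▸ rfl⟩
    intro i hi
    rcases List.mem_append.mp hi with h' | h'
    exacts [hK₁ i h', hK₂ i h']
  · rintro x _ ⟨ω, hK, rfl⟩
    refine ⟨ω.reverse, ?_, cs.wordProd_reverse ω⟩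
    intro i hi
    exact hK i (List.mem_reverse.mp hi)

theorem word_parab {K : Set B} {ω : List B} (h : ∀ i ∈ ω, i ∈ K) :
    π ω ∈ parab cs K := by
  induction ω with
  | nil => rw [cs.wordProd_nil]; exact one_mem _
  | cons i ω ih =>
    rw [cs.wordProd_cons]
    exact mul_mem (Subgroup.subset_closure ⟨i, h i List.mem_cons_self, rfl⟩)
      (ih fun j hj => h j (List.mem_cons_of_mem i hj))

theorem parab_mul_simple_left {K : Set B} {w : W} {i : B} (hw : w ∈ parab cs K)
    (h : ℓ (s i * w) < ℓ w) : s i * w ∈ parab cs K := by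
  obtain ⟨ω, hK, hπ⟩ := parab_word cs hw
  have hwrev : π ω.reverse = w⁻¹ := by rw [cs.wordProd_reverse, hπ]
  have hinv : w⁻¹ * s i = (s i * w)⁻¹ := by rw [mul_inv_rev, cs.inv_simple]
  have hℓ : ℓ (π ω.reverse * s i) < ℓ (π ω.reverse) := by
    rw [hwrev, hinv, cs.length_inv, cs.length_inv]
    exact h
  obtain ⟨j, hj, hjeq⟩ := strongExchange cs ω.reverse (s i) (cs.isReflection_simple i) hℓ
  have h2 : s i * w = π ((ω.reverse.eraseIdx j).reverse) := by
    rw [cs.wordProd_reverse, ← hjeq, hwrev, hinv, inv_inv]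
  rw [h2]
  apply word_parab
  intro k hk
  have hk2 : k ∈ ω.reverse.eraseIdx j := List.mem_reverse.mp hk
  have hk3 : k ∈ ω.reverse := (List.eraseIdx_sublist _ j).mem hk2
  exact hK k (List.mem_reverse.mp hk3)

theorem parab_reduced {K : Set B} {w : W} (h : w ∈ parab cs K) :
    ∃ ω : List B, (∀ i ∈ ω, i ∈ K) ∧ cs.IsReduced ω ∧ π ω = w := by
  obtain ⟨ω, hK, hπ⟩ := parab_word cs h
  obtain ⟨τ, hsub, hred, hτπ⟩ := exists_reduced_sublist cs ω
  exact ⟨τ, fun i hi => hK i (hsub.mem hi), hred, hτπ.trans hπ⟩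

theorem simple_mem_parab {K : Set B} {i : B} (h : s i ∈ parab cs K) :
    ∃ k ∈ K, s k = s i := by
  obtain ⟨ω, hK, hred, hπ⟩ := parab_reduced cs h
  have hlen : ω.length = 1 := by
    have h1 : ℓ (π ω) = ω.length := hred
    rw [hπ, cs.length_simple] at h1
    omega
  match ω, hlen with
  | [k], _ =>
    refine ⟨k, hK k List.mem_cons_self, ?_⟩
    rw [← cs.wordProd_singleton, hπ]

theorem main_aux : ∀ (n : ℕ) (K : Set B) (u x y : W), ℓ u ≤ n → u = x * y →
    InQuot cs K x → y ∈ parab cs K → ℓ u = ℓ x + ℓ y →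
    (supp cs x ∩ K ⊆ DescL cs y) → ∀ w, w ∈ parab cs K → le cs w u → le cs w y := by
  intro n
  induction n with
  | zero =>
    intro K u x y hn hu hx hy hadd hBP w hw hwu
    have hx1 : x = 1 := cs.length_eq_zero_iff.mp (by omega)
    rw [hu, hx1, one_mul] at hwu
    exact hwu
  | succ n ih =>
    intro K u x y hn hu hx hy hadd hBP w hw hwu
    rcases Nat.eq_zero_or_pos (ℓ x) with hx0 | hxpos
    · have hx1 : x = 1 := cs.length_eq_zero_iff.mp hx0
      rw [hu, hx1, one_mul] at hwu
      exact hwu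
    · have hxne : x ≠ 1 := by
        intro hh
        rw [hh, cs.length_one] at hxpos
        omega
      obtain ⟨i, hi⟩ := cs.exists_leftDescent_of_ne_one hxne
      have hi' : ℓ (s i * x) + 1 = ℓ x := cs.isLeftDescent_iff.mp hi
      have hassoc : s i * u = (s i * x) * y := by rw [hu, mul_assoc]
      have hulen : ℓ (s i * u) < ℓ u := by
        have h1 : ℓ ((s i * x) * y) ≤ ℓ (s i * x) + ℓ y := cs.length_mul_le _ _
        rw [hassoc]
        omega
      have hu1 : ℓ (s i * u) + 1 = ℓ u := cs.isLeftDescent_iff.mp hulen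
      have hadd' : ℓ (s i * u) = ℓ (s i * x) + ℓ y := by omega
      have hq' : InQuot cs K (s i * x) := by
        intro j hj
        have h1 := hx j hj
        have h2 : ℓ (x * s j) ≤ ℓ (s i * (x * s j)) + 1 := by
          rcases cs.length_simple_mul (x * s j) i with h' | h' <;> omega
        have h3 : (s i * x) * s j = s i * (x * s j) := by rw [mul_assoc]
        rw [h3]
        omega
      have hBP' : supp cs (s i * x) ∩ K ⊆ DescL cs y := by
        rintro j ⟨hj1, hj2⟩
        refine hBP ⟨?_, hj2⟩
        exact le_trans' cs hj1 (le_demote_left cs hi)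
      have hne_w := cs.length_simple_mul_ne w i
      rcases lt_or_gt_of_ne hne_w with hvw | hvw
      · have hw' : le cs (s i * w) (s i * u) := lift_i cs hwu hulen hvw
        have hwp : s i * w ∈ parab cs K := parab_mul_simple_left cs hw hvw
        have hyw' : le cs (s i * w) y :=
          ih K (s i * u) (s i * x) y (by omega) hassoc hq' hy hadd' hBP' (s i * w) hwp hw'
        have hsi_parab : s i ∈ parab cs K := by
          have h4 := mul_mem hwp (inv_mem hw)
          rwa [mul_assoc, mul_inv_cancel, mul_one] at h4
        obtain ⟨k, hkK, hks⟩ := simple_mem_parab cs hsi_parab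
        have hk_supp : k ∈ supp cs x := by
          show le cs (s k) x
          rw [hks]
          exact le_simple_of_left_descent cs hi
        have hdesc : ℓ (s k * y) < ℓ y := hBP ⟨hk_supp, hkK⟩
        have hdesc' : ℓ (s i * y) < ℓ y := by rwa [hks] at hdesc
        have h5 := lift_iii cs hyw' hdesc'
        rwa [smc] at h5
      · have hw' : le cs w (s i * u) := lift_ii cs hwu hulen hvw
        exact ih K (s i * u) (s i * x) y (by omega) hassoc hq' hy hadd' hBP' w hw hw'

end

end BP


theorem stmt9 {B W : Type*} [Group W] {M : CoxeterMatrix B} (cs : CoxeterSystem M W)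
    (K : Set B) (u x y v xv yv : W) (hu : u = x * y)
    (hx : InQuot cs K x) (hy : y ∈ parab cs K)
    (hadd : cs.length u = cs.length x + cs.length y)
    (hBP : supp cs x ∩ K ⊆ DescL cs y)
    (hvu : le cs v u) (hv : v = xv * yv)
    (hxv : InQuot cs K xv) (hyv : yv ∈ parab cs K)
    (haddv : cs.length v = cs.length xv + cs.length yv) :
    le cs yv y := by
  have haddv' : cs.length (xv * yv) = cs.length xv + cs.length yv := by
    rw [← hv]; exact haddv
  have h1 : le cs yv v := by
    rw [hv]
    exact BP.le_of_add_left cs haddv'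
  have h2 : le cs yv u := BP.le_trans' cs h1 hvu
  exact BP.main_aux cs (cs.length u) K u x y (Nat.le_refl _) hu hx hy hadd hBP yv hyv h2
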